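/- arXiv:2404.18728 — 3 statements merged into one kernel-verified Lean document; each statement's English description precedes it below -/
import Mathlib

section
/- Let n_1, …, n_ℓ be natural numbers, n = n_1 + ⋯ + n_ℓ, let T ⊂ ℝ^ℓ_+ be compact and convex, and let S_j ⊂ ℝ^{n_j}_+ be compact, convex and contain 0 for j = 1, …, ℓ. Then S = ⋃_{x ∈ T} (x_1 S_1) × ⋯ × (x_ℓ S_ℓ) is a compact convex subset of ℝ^n_+ containing 0, and its support function satisfies φ_S(ξ) = φ_T(φ_{S_1}(ξ_1), …, φ_{S_ℓ}(ξ_ℓ)) for all ξ = (ξ_1, …, ξ_ℓ) ∈ ℝ^n with ξ_j ∈ ℝ^{n_j}. -/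
open MeasureTheory Filter Topology Pointwise ENNReal

noncomputable section

/-- The positive part of an extended real number, as an element of `ℝ≥0∞`. -/
def erealPos (x : EReal) : ℝ≥0∞ :=
  if x = ⊤ then ⊤ else ENNReal.ofReal x.toReal

/-- The (signed) integral of an `EReal`-valued function over `(0, 2π]`,
with the convention `⊤ - ⊤ = ⊥` inherited from `EReal` subtraction. -/
def circleInt (g : ℝ → EReal) : EReal :=
  ((∫⁻ θ in Set.Ioc (0 : ℝ) (2 * Real.pi), erealPos (g θ)) : ℝ≥0∞)
    - ((∫⁻ θ in Set.Ioc (0 : ℝ) (2 * Real.pi), erealPos (-g θ)) : ℝ≥0∞)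

/-- The mean value of `u` over the circle `θ ↦ a + r e^{iθ} b`. -/
def cAvg {ι : Type*} (u : (ι → ℂ) → EReal) (a b : ι → ℂ) (r : ℝ) : EReal :=
  (((2 * Real.pi)⁻¹ : ℝ) : EReal) *
    circleInt fun θ => u (a + ((r : ℂ) * Complex.exp ((θ : ℂ) * Complex.I)) • b)

/-- `u : ℂ^ι → [-∞, ∞)` is plurisubharmonic: upper semicontinuous, not identically `-∞`,
and satisfying the sub-mean value inequality on every complex line. -/
def IsPsh {ι : Type*} (u : (ι → ℂ) → EReal) : Prop :=
  UpperSemicontinuous u ∧ (∃ z, u z ≠ ⊥) ∧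
    ∀ a b (r : ℝ), 0 < r → u a ≤ cAvg u a b r

/-- Plurisubharmonic on an open set `Ω`. -/
def IsPshOn {ι : Type*} (u : (ι → ℂ) → EReal) (Ω : Set (ι → ℂ)) : Prop :=
  UpperSemicontinuousOn u Ω ∧ (∃ z ∈ Ω, u z ≠ ⊥) ∧
    ∀ a b (r : ℝ), 0 < r →
      (∀ ζ : ℂ, ‖ζ‖ ≤ r → a + ζ • b ∈ Ω) → u a ≤ cAvg u a b r

/-- A set is pluripolar if it is contained in the `-∞` locus of a psh function. -/
def Pluripolar {ι : Type*} (E : Set (ι → ℂ)) : Prop :=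
  ∃ u, IsPsh u ∧ ∀ z ∈ E, u z = ⊥

/-- The support function `φ_A(ξ) = sup_{x ∈ A} ⟨x, ξ⟩` of a set `A ⊆ ℝ^ι`. -/
def suppFn {ι : Type*} [Fintype ι] (A : Set (ι → ℝ)) (ξ : ι → ℝ) : ℝ :=
  sSup ((fun x => ∑ i, x i * ξ i) '' A)

/-- The support function extended (monotonically) to `EReal`-valued arguments. -/
def suppFnE {ι : Type*} [Fintype ι] (A : Set (ι → ℝ)) (ξ : ι → EReal) : EReal :=
  ⨆ x ∈ A, ∑ i, (x i : EReal) * ξ i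

/-- The logarithmic support function
`H_S(z) = limsup_{(ℂ*)^ι ∋ w → z} φ_S(log|w_1|, …, log|w_ι|)`;
on `(ℂ*)^ι` this agrees with `φ_S ∘ Log`. -/
def HS {ι : Type*} [Fintype ι] (S : Set (ι → ℝ)) (z : ι → ℂ) : ℝ :=
  limsup (fun w : ι → ℂ => suppFn S fun i => Real.log ‖w i‖)
    (𝓝[{w : ι → ℂ | ∀ i, w i ≠ 0}] z)

/-- The Lelong class `L^S(ℂ^ι)`: psh functions with `u ≤ H_S + c` for some constant. -/
def Lelong {ι : Type*} [Fintype ι] (S : Set (ι → ℝ)) (u : (ι → ℂ) → EReal) : Prop :=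
  IsPsh u ∧ ∃ c : ℝ, ∀ z, u z ≤ ((HS S z + c : ℝ) : EReal)

/-- The class `L^S_+(ℂ^ι)`: psh functions with `H_S - c ≤ u ≤ H_S + c`. -/
def LelongPlus {ι : Type*} [Fintype ι] (S : Set (ι → ℝ)) (u : (ι → ℂ) → EReal) : Prop :=
  IsPsh u ∧ ∃ c : ℝ, ∀ z, ((HS S z - c : ℝ) : EReal) ≤ u z ∧ u z ≤ ((HS S z + c : ℝ) : EReal)

/-- The weighted Siciak–Zakharyuta function
`V^S_{K,q}(z) = sup { u(z) : u ∈ L^S(ℂ^ι), u ≤ q on K }`. -/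
def SZw {ι : Type*} [Fintype ι] (S : Set (ι → ℝ)) (K : Set (ι → ℂ))
    (q : (ι → ℂ) → EReal) (z : ι → ℂ) : ℝ :=
  sSup {t : ℝ | ∃ u, Lelong S u ∧ (∀ w ∈ K, u w ≤ q w) ∧ (t : EReal) ≤ u z}

/-- The Siciak–Zakharyuta function `V^S_K` (weight `q = 0`). -/
def SZ {ι : Type*} [Fintype ι] (S : Set (ι → ℝ)) (K : Set (ι → ℂ)) (z : ι → ℂ) : ℝ :=
  SZw S K 0 z

/-- Upper semicontinuous regularization of a real-valued function. -/
def uscReg {ι : Type*} (f : (ι → ℂ) → ℝ) (z : ι → ℂ) : ℝ := limsup f (𝓝 z)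

/-- An admissible weight on `K`: lower semicontinuous, `(-∞, ∞]`-valued,
and finite on a non-pluripolar set. -/
def Admissible {ι : Type*} [Fintype ι] (K : Set (ι → ℂ)) (q : (ι → ℂ) → EReal) : Prop :=
  LowerSemicontinuousOn q K ∧ (∀ z ∈ K, q z ≠ ⊥) ∧ ¬ Pluripolar {z ∈ K | q z ≠ ⊤}

/-- `v` is maximal on the open set `Ω`: for every relatively compact open `G` with
closure in `Ω` and every psh `w` on `Ω` with `w ≤ v` on `∂G`, one has `w ≤ v` on `G`. -/
def MaximalOn {ι : Type*} (v : (ι → ℂ) → EReal) (Ω : Set (ι → ℂ)) : Prop :=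
  ∀ G : Set (ι → ℂ), IsOpen G → IsCompact (closure G) → closure G ⊆ Ω →
    ∀ w, IsPshOn w Ω → (∀ z ∈ frontier G, w z ≤ v z) → ∀ z ∈ G, w z ≤ v z

/-- The standard simplex `Σ = ch{0, e₁, …, e_n}` in `ℝ^ι`. -/
def simplex0 (ι : Type*) [Fintype ι] : Set (ι → ℝ) :=
  {x | (∀ i, 0 ≤ x i) ∧ ∑ i, x i ≤ 1}

/-- `A` is a lower set: with each `s ∈ A` it contains the box `[0,s₁] × ⋯ × [0,s_n]`. -/
def BoxLower {ι : Type*} (A : Set (ι → ℝ)) : Prop :=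
  ∀ s ∈ A, ∀ x : ι → ℝ, (∀ i, 0 ≤ x i) → (∀ i, x i ≤ s i) → x ∈ A

/-- The lower hull of `S`: the smallest lower set containing `S`. -/
def lowerHull {ι : Type*} (S : Set (ι → ℝ)) : Set (ι → ℝ) :=
  ⋂₀ {A | S ⊆ A ∧ BoxLower A}

end

lemma suppFn_spec {ι : Type*} [Fintype ι] {A : Set (ι → ℝ)} (hA : IsCompact A)
    (hne : A.Nonempty) (ξ : ι → ℝ) :
    ∃ a ∈ A, (∑ i, a i * ξ i) = suppFn A ξ ∧ ∀ x ∈ A, ∑ i, x i * ξ i ≤ suppFn A ξ := by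
  have hcont : Continuous fun x : ι → ℝ => ∑ i, x i * ξ i :=
    continuous_finset_sum _ fun i _ => (continuous_apply i).mul continuous_const
  obtain ⟨a, haA, hmax⟩ := hA.exists_isMaxOn hne hcont.continuousOn
  have hg : IsGreatest ((fun x => ∑ i, x i * ξ i) '' A) (∑ i, a i * ξ i) :=
    ⟨⟨a, haA, rfl⟩, by rintro _ ⟨x, hx, rfl⟩; exact hmax hx⟩
  exact ⟨a, haA, hg.csSup_eq.symm, fun x hx => by
    rw [suppFn, hg.csSup_eq]; exact hmax hx⟩

/-- The set `S = ⋃_{x ∈ T} (x₁S₁) × ⋯ × (x_ℓ S_ℓ)` is compact, convex, contained in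
`ℝ^n_+`, contains `0`, and its support function is `φ_S(ξ) = φ_T(φ_{S₁}(ξ₁), …, φ_{S_ℓ}(ξ_ℓ))`. -/
theorem stmt9 (ℓ : ℕ) (n : Fin ℓ → ℕ)
    (T : Set (Fin ℓ → ℝ)) (hTne : T.Nonempty) (hTc : IsCompact T) (hTconv : Convex ℝ T)
    (hTpos : ∀ x ∈ T, ∀ j, 0 ≤ x j)
    (S : (j : Fin ℓ) → Set (Fin (n j) → ℝ))
    (hSc : ∀ j, IsCompact (S j)) (hSconv : ∀ j, Convex ℝ (S j))
    (hSpos : ∀ j, ∀ s ∈ S j, ∀ i, 0 ≤ s i)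
    (hS0 : ∀ j, (0 : Fin (n j) → ℝ) ∈ S j)
    (Sbig : Set (((j : Fin ℓ) × Fin (n j)) → ℝ))
    (hSbig : Sbig = {ξ | ∃ x ∈ T, ∀ j, (fun i => ξ ⟨j, i⟩) ∈ x j • S j}) :
    IsCompact Sbig ∧ Convex ℝ Sbig ∧ (∀ ξ ∈ Sbig, ∀ i, 0 ≤ ξ i) ∧
      (0 : ((j : Fin ℓ) × Fin (n j)) → ℝ) ∈ Sbig ∧
      ∀ ξ : ((j : Fin ℓ) × Fin (n j)) → ℝ,
        suppFn Sbig ξ = suppFn T (fun j => suppFn (S j) (fun i => ξ ⟨j, i⟩)) := by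
  classical
  set F : ((Fin ℓ → ℝ) × ((j : Fin ℓ) → Fin (n j) → ℝ)) → ((j : Fin ℓ) × Fin (n j)) → ℝ :=
    fun p q => p.1 q.1 * p.2 q.1 q.2 with hF
  have himg : Sbig = F '' (T ×ˢ Set.univ.pi S) := by
    rw [hSbig]
    ext ξ
    constructor
    · rintro ⟨x, hxT, hx⟩
      choose s hs hxs using fun j => (Set.mem_smul_set).1 (hx j)
      exact ⟨(x, s), ⟨hxT, fun j _ => hs j⟩, funext fun q => by
        have := congrFun (hxs q.1) q.2
        simpa [hF] using this⟩
    · rintro ⟨⟨x, s⟩, ⟨hxT, hs⟩, rfl⟩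
      exact ⟨x, hxT, fun j => ⟨s j, hs j (Set.mem_univ _), funext fun i => rfl⟩⟩
  have hcontF : Continuous F := continuous_pi fun q =>
    ((continuous_apply q.1).comp continuous_fst).mul
      ((continuous_apply q.2).comp ((continuous_apply q.1).comp continuous_snd))
  have hcomp : IsCompact Sbig := by
    rw [himg]
    exact (hTc.prod (isCompact_univ_pi hSc)).image hcontF
  have hpos : ∀ ξ ∈ Sbig, ∀ i, 0 ≤ ξ i := by
    rw [hSbig]
    rintro ξ ⟨x, hxT, hx⟩ ⟨j, i⟩
    obtain ⟨s, hs, hxs⟩ := hx j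
    have h := congrFun hxs i
    simp only [Pi.smul_apply, smul_eq_mul] at h
    calc (0:ℝ) ≤ x j * s i := mul_nonneg (hTpos x hxT j) (hSpos j s hs i)
      _ = ξ ⟨j, i⟩ := h
  have h0 : (0 : ((j : Fin ℓ) × Fin (n j)) → ℝ) ∈ Sbig := by
    rw [hSbig]
    obtain ⟨x, hxT⟩ := hTne
    exact ⟨x, hxT, fun j => ⟨0, hS0 j, by funext i; simp⟩⟩
  have hconv : Convex ℝ Sbig := by
    rw [hSbig]
    rintro ξ ⟨x, hxT, hx⟩ ξ' ⟨x', hx'T, hx'⟩ a b ha hb hab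
    refine ⟨a • x + b • x', hTconv hxT hx'T ha hb hab, fun j => ?_⟩
    obtain ⟨s, hs, hxs⟩ := hx j
    obtain ⟨s', hs', hx's⟩ := hx' j
    have hxj := hTpos x hxT j
    have hx'j := hTpos x' hx'T j
    by_cases hzj : a * x j + b * x' j = 0
    · have h1 : a * x j = 0 := by nlinarith
      have h2 : b * x' j = 0 := by nlinarith
      refine ⟨0, hS0 j, funext fun i => ?_⟩
      have e1 := congrFun hxs i
      have e2 := congrFun hx's i
      simp only [Pi.smul_apply, Pi.add_apply, smul_eq_mul, Pi.zero_apply] at e1 e2 ⊢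
      rw [← e1, ← e2, hzj, zero_mul, ← mul_assoc, ← mul_assoc, h1, h2, zero_mul,
        zero_mul, add_zero]
    · have hz0 : 0 < a * x j + b * x' j :=
        lt_of_le_of_ne (by positivity) (Ne.symm hzj)
      have hzne : a * x j + b * x' j ≠ 0 := hz0.ne'
      refine ⟨(a * x j / (a * x j + b * x' j)) • s + (b * x' j / (a * x j + b * x' j)) • s',
        hSconv j hs hs' (div_nonneg (mul_nonneg ha hxj) hz0.le)
          (div_nonneg (mul_nonneg hb hx'j) hz0.le)
          (by field_simp), funext fun i => ?_⟩
      have e1 := congrFun hxs i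
      have e2 := congrFun hx's i
      simp only [Pi.smul_apply, Pi.add_apply, smul_eq_mul, Pi.zero_apply] at e1 e2 ⊢
      rw [← e1, ← e2]
      field_simp
  refine ⟨hcomp, hconv, hpos, h0, fun ξ => ?_⟩
  set y : Fin ℓ → ℝ := fun j => suppFn (S j) (fun i => ξ ⟨j, i⟩) with hy
  have hSne : ∀ j, (S j).Nonempty := fun j => ⟨0, hS0 j⟩
  obtain ⟨xT, hxTT, hxTeq, hxTub⟩ := suppFn_spec hTc hTne y
  have hbigne : Sbig.Nonempty := ⟨0, h0⟩
  obtain ⟨ζ, hζ, hζeq, hζub⟩ := suppFn_spec hcomp hbigne ξ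
  have hjmax : ∀ j, ∃ a ∈ S j, (∑ i, a i * ξ ⟨j, i⟩) = y j ∧
      ∀ s ∈ S j, ∑ i, s i * ξ ⟨j, i⟩ ≤ y j :=
    fun j => suppFn_spec (hSc j) (hSne j) _
  choose sm hsm hsmeq hsmub using hjmax
  apply le_antisymm
  · rw [← hζeq]
    rw [hSbig] at hζ
    obtain ⟨x, hxT, hx⟩ := hζ
    choose s hs hxs using fun j => (Set.mem_smul_set).1 (hx j)
    have hsum : ∑ p : (j : Fin ℓ) × Fin (n j), ζ p * ξ p
        = ∑ j, x j * ∑ i, s j i * ξ ⟨j, i⟩ := by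
      rw [← Finset.univ_sigma_univ, Finset.sum_sigma]
      refine Finset.sum_congr rfl fun j _ => ?_
      rw [Finset.mul_sum]
      refine Finset.sum_congr rfl fun i _ => ?_
      have h := congrFun (hxs j) i
      simp only [Pi.smul_apply, smul_eq_mul] at h
      rw [← h]; ring
    rw [hsum]
    calc ∑ j, x j * ∑ i, s j i * ξ ⟨j, i⟩ ≤ ∑ j, x j * y j :=
          Finset.sum_le_sum fun j _ =>
            mul_le_mul_of_nonneg_left (hsmub j (s j) (hs j)) (hTpos x hxT j)
      _ ≤ suppFn T y := hxTub x hxT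
  · rw [← hxTeq]
    have hmem : (fun q : (j : Fin ℓ) × Fin (n j) => xT q.1 * sm q.1 q.2) ∈ Sbig := by
      rw [hSbig]
      exact ⟨xT, hxTT, fun j => ⟨sm j, hsm j, funext fun i => rfl⟩⟩
    calc ∑ j, xT j * y j
        = ∑ p : (j : Fin ℓ) × Fin (n j), (xT p.1 * sm p.1 p.2) * ξ p := by
          rw [← Finset.univ_sigma_univ, Finset.sum_sigma]
          refine Finset.sum_congr rfl fun j _ => ?_
          rw [← hsmeq j, Finset.mul_sum]
          exact Finset.sum_congr rfl fun i _ => by ring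
      _ ≤ suppFn Sbig ξ := hζub _ hmem
end

section
/- Let n_1, …, n_ℓ be natural numbers, n = n_1 + ⋯ + n_ℓ, let T ⊂ ℝ^ℓ_+ be compact and convex, let S_j ⊂ ℝ^{n_j}_+ be compact, convex and contain 0 for j = 1, …, ℓ, and let S = ⋃_{x ∈ T} (x_1 S_1) × ⋯ × (x_ℓ S_ℓ) ⊂ ℝ^n_+. Then the logarithmic support functions satisfy H_S(z) = φ_T(H_{S_1}(z_1), …, H_{S_ℓ}(z_ℓ)) for all z = (z_1, …, z_ℓ) ∈ ℂ^n with z_j ∈ ℂ^{n_j}. -/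
open MeasureTheory Filter Topology Pointwise ENNReal

section stmt10Aux

open Filter Topology

variable {ι : Type*} [Fintype ι]

private lemma stmt10.contSum (ξ : ι → ℝ) : Continuous (fun x : ι → ℝ => ∑ i, x i * ξ i) :=
  continuous_finset_sum _ fun i _ => (continuous_apply i).mul continuous_const

lemma stmt10.suppFn_bddAbove {A : Set (ι → ℝ)} (hA : IsCompact A) (ξ : ι → ℝ) :
    BddAbove ((fun x => ∑ i, x i * ξ i) '' A) :=
  (hA.image (stmt10.contSum ξ)).bddAbove

lemma stmt10.le_suppFn {A : Set (ι → ℝ)} (hA : IsCompact A) (ξ : ι → ℝ) {x : ι → ℝ}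
    (hx : x ∈ A) : ∑ i, x i * ξ i ≤ suppFn A ξ :=
  le_csSup (stmt10.suppFn_bddAbove hA ξ) ⟨x, hx, rfl⟩

lemma stmt10.suppFn_le {A : Set (ι → ℝ)} (hne : A.Nonempty) {ξ : ι → ℝ} {c : ℝ}
    (h : ∀ x ∈ A, ∑ i, x i * ξ i ≤ c) : suppFn A ξ ≤ c :=
  csSup_le (hne.image _) (by rintro y ⟨x, hx, rfl⟩; exact h x hx)

lemma stmt10.suppFn_nonneg {A : Set (ι → ℝ)} (hA : IsCompact A) (h0 : (0 : ι → ℝ) ∈ A)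
    (ξ : ι → ℝ) : 0 ≤ suppFn A ξ := by
  have := stmt10.le_suppFn hA ξ h0
  simpa using this

lemma stmt10.suppFn_mono {A : Set (ι → ℝ)} (hA : IsCompact A) (hne : A.Nonempty)
    (hpos : ∀ x ∈ A, ∀ i, 0 ≤ x i) {ξ η : ι → ℝ} (hle : ∀ i, ξ i ≤ η i) :
    suppFn A ξ ≤ suppFn A η :=
  stmt10.suppFn_le hne fun x hx => le_trans
    (Finset.sum_le_sum fun i _ => mul_le_mul_of_nonneg_left (hle i) (hpos x hx i))
    (stmt10.le_suppFn hA η hx)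

lemma stmt10.suppFn_exists {A : Set (ι → ℝ)} (hA : IsCompact A) (hne : A.Nonempty)
    (ξ : ι → ℝ) : ∃ x ∈ A, suppFn A ξ = ∑ i, x i * ξ i := by
  obtain ⟨x, hx, hval⟩ := (hA.image (stmt10.contSum ξ)).sSup_mem (hne.image _)
  exact ⟨x, hx, hval.symm⟩

lemma stmt10.neBot_ne_zero (z : ι → ℂ) :
    (𝓝[{w : ι → ℂ | ∀ i, w i ≠ 0}] z).NeBot := by
  rw [← mem_closure_iff_nhdsWithin_neBot, Metric.mem_closure_iff]
  intro ε hε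
  refine ⟨fun i => if z i = 0 then ((ε / 2 : ℝ) : ℂ) else z i, fun i => ?_, ?_⟩
  · show (if z i = 0 then ((ε / 2 : ℝ) : ℂ) else z i) ≠ 0
    split_ifs with h
    · exact_mod_cast (by positivity : (0:ℝ) < ε / 2).ne'
    · exact h
  · rw [dist_pi_lt_iff hε]
    intro i
    show dist (z i) (if z i = 0 then ((ε / 2 : ℝ) : ℂ) else z i) < ε
    split_ifs with h
    · rw [h, dist_comm, dist_zero_right, Complex.norm_real, Real.norm_eq_abs,
        abs_of_pos (by positivity : (0:ℝ) < ε / 2)]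
      linarith
    · simpa using hε

lemma stmt10.suppFn_log_bddAbove {A : Set (ι → ℝ)} (hA : IsCompact A) (hne : A.Nonempty)
    (hpos : ∀ x ∈ A, ∀ i, 0 ≤ x i) (z : ι → ℂ) :
    ∃ M : ℝ, ∀ᶠ w in 𝓝[{w : ι → ℂ | ∀ i, w i ≠ 0}] z,
      suppFn A (fun i => Real.log (‖w i‖)) ≤ M := by
  refine ⟨suppFn A (fun _ => Real.log (∑ i, ‖z i‖ + 1)), ?_⟩
  have hball : Metric.ball z 1 ∈ 𝓝[{w : ι → ℂ | ∀ i, w i ≠ 0}] z :=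
    mem_nhdsWithin_of_mem_nhds (Metric.ball_mem_nhds z one_pos)
  filter_upwards [hball, self_mem_nhdsWithin] with w hw hwD
  refine stmt10.suppFn_mono hA hne hpos fun i => ?_
  have h0 : 0 < ‖w i‖ := norm_pos_iff.mpr (hwD i)
  refine Real.log_le_log h0 ?_
  have h1 : ‖w i‖ - ‖z i‖ ≤ dist (w i) (z i) := by
    rw [Complex.dist_eq]
    simpa using norm_sub_norm_le (w i) (z i)
  have h2 : dist (w i) (z i) ≤ dist w z := dist_le_pi_dist w z i
  have h3 : dist w z < 1 := by simpa [Metric.mem_ball] using hw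
  have h4 : ‖z i‖ ≤ ∑ k, ‖z k‖ :=
    Finset.single_le_sum (f := fun k => ‖z k‖)
      (fun k _ => norm_nonneg _) (Finset.mem_univ i)
  linarith

end stmt10Aux

/-- The logarithmic support functions satisfy
`H_S(z) = φ_T(H_{S₁}(z₁), …, H_{S_ℓ}(z_ℓ))` for `S = ⋃_{x ∈ T} (x₁S₁) × ⋯ × (x_ℓ S_ℓ)`. -/
theorem stmt10 (ℓ : ℕ) (n : Fin ℓ → ℕ)
    (T : Set (Fin ℓ → ℝ)) (hTne : T.Nonempty) (hTc : IsCompact T) (hTconv : Convex ℝ T)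
    (hTpos : ∀ x ∈ T, ∀ j, 0 ≤ x j)
    (S : (j : Fin ℓ) → Set (Fin (n j) → ℝ))
    (hSc : ∀ j, IsCompact (S j)) (hSconv : ∀ j, Convex ℝ (S j))
    (hSpos : ∀ j, ∀ s ∈ S j, ∀ i, 0 ≤ s i)
    (hS0 : ∀ j, (0 : Fin (n j) → ℝ) ∈ S j)
    (Sbig : Set (((j : Fin ℓ) × Fin (n j)) → ℝ))
    (hSbig : Sbig = {ξ | ∃ x ∈ T, ∀ j, (fun i => ξ ⟨j, i⟩) ∈ x j • S j})
    (z : ((j : Fin ℓ) × Fin (n j)) → ℂ) :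
    HS Sbig z = suppFn T (fun j => HS (S j) (fun i => z ⟨j, i⟩)) := by
    classical
  open Filter Topology stmt10 in
  show _
  have hSne : ∀ j, (S j).Nonempty := fun j => ⟨0, hS0 j⟩
  -- the pointwise identity for support functions
  have key : ∀ ξ : ((j : Fin ℓ) × Fin (n j)) → ℝ,
      suppFn Sbig ξ = suppFn T (fun j => suppFn (S j) (fun i => ξ ⟨j, i⟩)) := by
    intro ξ
    have hub : ∀ s ∈ Sbig, ∑ k, s k * ξ k ≤
        suppFn T (fun j => suppFn (S j) (fun i => ξ ⟨j, i⟩)) := by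
      intro s hs
      rw [hSbig] at hs
      obtain ⟨x, hxT, hx⟩ := hs
      choose t htm hts using fun j => Set.mem_smul_set.mp (hx j)
      have hsum : ∑ k, s k * ξ k = ∑ j, ∑ i, s ⟨j, i⟩ * ξ ⟨j, i⟩ := by
        rw [← Finset.univ_sigma_univ, Finset.sum_sigma]
      rw [hsum]
      refine le_trans (Finset.sum_le_sum fun j _ => ?_)
        (stmt10.le_suppFn hTc (fun j => suppFn (S j) (fun i => ξ ⟨j, i⟩)) hxT)
      have hsji : ∀ i, s ⟨j, i⟩ = x j * t j i := fun i => by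
        have h := congrFun (hts j) i
        simpa [smul_eq_mul] using h.symm
      calc ∑ i, s ⟨j, i⟩ * ξ ⟨j, i⟩ = x j * ∑ i, t j i * ξ ⟨j, i⟩ := by
            rw [Finset.mul_sum]
            exact Finset.sum_congr rfl fun i _ => by rw [hsji i, mul_assoc]
        _ ≤ x j * suppFn (S j) (fun i => ξ ⟨j, i⟩) :=
            mul_le_mul_of_nonneg_left (stmt10.le_suppFn (hSc j) _ (htm j)) (hTpos x hxT j)
    have hSbigne : Sbig.Nonempty := by
      obtain ⟨x, hxT⟩ := hTne
      refine ⟨fun _ => 0, ?_⟩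
      rw [hSbig]
      exact ⟨x, hxT, fun j => ⟨0, hS0 j, by funext i; simp⟩⟩
    have hbdd : BddAbove ((fun x => ∑ k, x k * ξ k) '' Sbig) := by
      refine ⟨suppFn T (fun j => suppFn (S j) (fun i => ξ ⟨j, i⟩)), ?_⟩
      rintro y ⟨s, hs, rfl⟩
      exact hub s hs
    refine le_antisymm (stmt10.suppFn_le hSbigne hub) (stmt10.suppFn_le hTne ?_)
    intro x hxT
    choose t htm htv using fun j => stmt10.suppFn_exists (hSc j) (hSne j) (fun i => ξ ⟨j, i⟩)
    have hsmem : (fun k : (j : Fin ℓ) × Fin (n j) => x k.1 * t k.1 k.2) ∈ Sbig := by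
      rw [hSbig]
      refine ⟨x, hxT, fun j => ⟨t j, htm j, ?_⟩⟩
      funext i
      simp [smul_eq_mul]
    have hle : ∑ k : (j : Fin ℓ) × Fin (n j), (x k.1 * t k.1 k.2) * ξ k ≤ suppFn Sbig ξ :=
      le_csSup hbdd ⟨_, hsmem, rfl⟩
    refine le_trans (le_of_eq ?_) hle
    rw [← Finset.univ_sigma_univ, Finset.sum_sigma]
    refine Finset.sum_congr rfl fun j _ => ?_
    rw [htv j, Finset.mul_sum]
    exact Finset.sum_congr rfl fun i _ => by ring
  -- pass to limsups
  simp only [HS, key]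
  haveI hNB : (𝓝[{w : ((j : Fin ℓ) × Fin (n j)) → ℂ | ∀ k, w k ≠ 0}] z).NeBot :=
    stmt10.neBot_ne_zero z
  haveI hNBj : ∀ j, (𝓝[{w : Fin (n j) → ℂ | ∀ i, w i ≠ 0}]
      (fun i => z ⟨j, i⟩)).NeBot := fun j => stmt10.neBot_ne_zero _
  -- projections
  have hproj : ∀ j, Tendsto (fun (w : ((j : Fin ℓ) × Fin (n j)) → ℂ) (i : Fin (n j)) => w ⟨j, i⟩)
      (𝓝[{w : ((j : Fin ℓ) × Fin (n j)) → ℂ | ∀ k, w k ≠ 0}] z)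
      (𝓝[{w : Fin (n j) → ℂ | ∀ i, w i ≠ 0}] (fun i => z ⟨j, i⟩)) := by
    intro j
    apply tendsto_nhdsWithin_of_tendsto_nhds_of_eventually_within
    · exact ((continuous_pi fun i =>
        continuous_apply (⟨j, i⟩ : (j : Fin ℓ) × Fin (n j))).tendsto z).mono_left
        nhdsWithin_le_nhds
    · filter_upwards [self_mem_nhdsWithin] with w hw
      exact fun i => hw ⟨j, i⟩
  -- boundedness of the coordinate functions
  choose M hM using fun j =>
    stmt10.suppFn_log_bddAbove (hSc j) (hSne j) (hSpos j) (fun i => z ⟨j, i⟩)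
  have hg0 : ∀ j (w : Fin (n j) → ℂ),
      0 ≤ suppFn (S j) (fun i => Real.log (‖w i‖)) := fun j w =>
    stmt10.suppFn_nonneg (hSc j) (hS0 j) _
  have hbddLe : ∀ j, (𝓝[{w : Fin (n j) → ℂ | ∀ i, w i ≠ 0}] (fun i => z ⟨j, i⟩)).IsBoundedUnder
      (· ≤ ·) (fun w => suppFn (S j) (fun i => Real.log (‖w i‖))) := fun j =>
    ⟨M j, by simpa [Filter.eventually_map] using hM j⟩
  have hcoLe : ∀ j, (𝓝[{w : Fin (n j) → ℂ | ∀ i, w i ≠ 0}] (fun i => z ⟨j, i⟩)).IsCoboundedUnder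
      (· ≤ ·) (fun w => suppFn (S j) (fun i => Real.log (‖w i‖))) := fun j =>
    Filter.isCoboundedUnder_le_of_le _ (fun w => hg0 j w)
  -- abbreviation for the limsups
  set L : Fin ℓ → ℝ := fun j =>
    limsup (fun w : Fin (n j) → ℂ => suppFn (S j) fun i => Real.log (‖w i‖))
      (𝓝[{w : Fin (n j) → ℂ | ∀ i, w i ≠ 0}] (fun i => z ⟨j, i⟩)) with hLdef
  have hLub : ∀ j (δ : ℝ), 0 < δ →
      ∀ᶠ w in 𝓝[{w : Fin (n j) → ℂ | ∀ i, w i ≠ 0}] (fun i => z ⟨j, i⟩),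
        suppFn (S j) (fun i => Real.log (‖w i‖)) < L j + δ := by
    intro j δ hδ
    refine Filter.eventually_lt_of_limsup_lt ?_ (hbddLe j)
    rw [hLdef]
    simpa using hδ
  have hLlb : ∀ j (δ : ℝ), 0 < δ →
      ∃ᶠ w in 𝓝[{w : Fin (n j) → ℂ | ∀ i, w i ≠ 0}] (fun i => z ⟨j, i⟩),
        L j - δ < suppFn (S j) (fun i => Real.log (‖w i‖)) := by
    intro j δ hδ
    refine Filter.frequently_lt_of_lt_limsup (hcoLe j) ?_
    rw [hLdef]
    simpa using hδ
  -- constant controlling sums over T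
  obtain ⟨C, hC0, hCle⟩ : ∃ C : ℝ, 0 ≤ C ∧ ∀ x ∈ T, ∑ j, x j ≤ C := by
    refine ⟨max 0 (suppFn T (fun _ => 1)), le_max_left _ _, fun x hx => ?_⟩
    have h := stmt10.le_suppFn hTc (fun _ => 1) hx
    simp only [mul_one] at h
    exact h.trans (le_max_right _ _)
  -- boundedness of the big function
  have hΦ0 : ∀ w : ((j : Fin ℓ) × Fin (n j)) → ℂ,
      0 ≤ suppFn T (fun j => suppFn (S j)
        (fun i => Real.log (‖w ⟨j, i⟩‖))) := by
    intro w
    obtain ⟨x, hxT⟩ := hTne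
    refine le_trans ?_ (stmt10.le_suppFn hTc _ hxT)
    exact Finset.sum_nonneg fun j _ => mul_nonneg (hTpos x hxT j) (hg0 j _)
  have hΦbdd : (𝓝[{w : ((j : Fin ℓ) × Fin (n j)) → ℂ | ∀ k, w k ≠ 0}] z).IsBoundedUnder
      (· ≤ ·) (fun w => suppFn T (fun j => suppFn (S j)
        (fun i => Real.log (‖w ⟨j, i⟩‖)))) := by
    refine ⟨suppFn T M, ?_⟩
    rw [Filter.eventually_map]
    have h := Filter.eventually_all.mpr fun j => (hproj j).eventually (hM j)
    filter_upwards [h] with w hw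
    exact stmt10.suppFn_mono hTc hTne hTpos hw
  have hΦco : (𝓝[{w : ((j : Fin ℓ) × Fin (n j)) → ℂ | ∀ k, w k ≠ 0}] z).IsCoboundedUnder
      (· ≤ ·) (fun w => suppFn T (fun j => suppFn (S j)
        (fun i => Real.log (‖w ⟨j, i⟩‖)))) :=
    Filter.isCoboundedUnder_le_of_le _ hΦ0
  refine le_antisymm ?_ ?_
  · -- upper bound
    refine le_of_forall_pos_le_add fun ε hε => ?_
    have hδ : 0 < ε / (C + 1) := by positivity
    have hev : ∀ᶠ w in 𝓝[{w : ((j : Fin ℓ) × Fin (n j)) → ℂ | ∀ k, w k ≠ 0}] z,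
        suppFn T (fun j => suppFn (S j) (fun i => Real.log (‖w ⟨j, i⟩‖))) ≤
          suppFn T (fun j => L j + ε / (C + 1)) := by
      have h := Filter.eventually_all.mpr fun j => (hproj j).eventually (hLub j _ hδ)
      filter_upwards [h] with w hw
      exact stmt10.suppFn_mono hTc hTne hTpos fun j => (hw j).le
    have h1 := Filter.limsup_le_of_le hΦco hev
    have h2 : suppFn T (fun j => L j + ε / (C + 1)) ≤ suppFn T L + (ε / (C + 1)) * C := by
      refine stmt10.suppFn_le hTne fun x hx => ?_
      have e1 : ∑ j, x j * (L j + ε / (C + 1)) =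
          (∑ j, x j * L j) + (ε / (C + 1)) * ∑ j, x j := by
        rw [Finset.mul_sum, ← Finset.sum_add_distrib]
        exact Finset.sum_congr rfl fun j _ => by ring
      rw [e1]
      have e2 := stmt10.le_suppFn hTc L hx
      have e3 : (ε / (C + 1)) * ∑ j, x j ≤ (ε / (C + 1)) * C :=
        mul_le_mul_of_nonneg_left (hCle x hx) hδ.le
      linarith
    have h3 : (ε / (C + 1)) * C ≤ ε := by
      rw [div_mul_eq_mul_div, div_le_iff₀ (by positivity : (0:ℝ) < C + 1)]
      nlinarith
    linarith
  · -- lower bound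
    refine le_of_forall_pos_le_add fun ε hε => ?_
    have hδ : 0 < ε / (C + 1) := by positivity
    obtain ⟨x, hxT, hxval⟩ := stmt10.suppFn_exists hTc hTne L
    have hfreq : ∃ᶠ w in 𝓝[{w : ((j : Fin ℓ) × Fin (n j)) → ℂ | ∀ k, w k ≠ 0}] z,
        ∀ j, L j - ε / (C + 1) <
          suppFn (S j) (fun i => Real.log (‖w ⟨j, i⟩‖)) := by
      rw [Filter.frequently_iff]
      intro U hU
      obtain ⟨ρ, hρ, hρU⟩ := Metric.mem_nhdsWithin_iff.mp hU
      have hsel : ∀ j, ∃ w' : Fin (n j) → ℂ,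
          (L j - ε / (C + 1) < suppFn (S j) (fun i => Real.log (‖w' i‖))) ∧
          w' ∈ Metric.ball (fun i => z ⟨j, i⟩) ρ ∧ ∀ i, w' i ≠ 0 := by
        intro j
        have hmem : (Metric.ball (fun i => z ⟨j, i⟩) ρ ∩
            {w : Fin (n j) → ℂ | ∀ i, w i ≠ 0}) ∈
            𝓝[{w : Fin (n j) → ℂ | ∀ i, w i ≠ 0}] (fun i => z ⟨j, i⟩) :=
          Filter.inter_mem (mem_nhdsWithin_of_mem_nhds (Metric.ball_mem_nhds _ hρ))
            self_mem_nhdsWithin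
        obtain ⟨w', hw1, hw2⟩ := ((hLlb j _ hδ).and_eventually hmem).exists
        exact ⟨w', hw1, hw2.1, hw2.2⟩
      choose w' hw1 hw2 hw3 using hsel
      refine ⟨fun k => w' k.1 k.2, hρU ⟨?_, ?_⟩, ?_⟩
      · rw [Metric.mem_ball, dist_pi_lt_iff hρ]
        intro k
        have hd : dist (w' k.1 k.2) ((fun i => z ⟨k.1, i⟩) k.2) ≤
            dist (w' k.1) (fun i => z ⟨k.1, i⟩) :=
          dist_le_pi_dist (w' k.1) (fun i => z ⟨k.1, i⟩) k.2
        have h2 := hw2 k.1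
        rw [Metric.mem_ball] at h2
        exact lt_of_le_of_lt hd h2
      · exact fun k => hw3 k.1 k.2
      · exact fun j => hw1 j
    have hfreq2 : ∃ᶠ w in 𝓝[{w : ((j : Fin ℓ) × Fin (n j)) → ℂ | ∀ k, w k ≠ 0}] z,
        suppFn T L - ε ≤ suppFn T (fun j => suppFn (S j)
          (fun i => Real.log (‖w ⟨j, i⟩‖))) := by
      refine hfreq.mono fun w hw => ?_
      have h1 : ∑ j, x j * (L j - ε / (C + 1)) ≤
          ∑ j, x j * suppFn (S j) (fun i => Real.log (‖w ⟨j, i⟩‖)) :=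
        Finset.sum_le_sum fun j _ => mul_le_mul_of_nonneg_left (hw j).le (hTpos x hxT j)
      have h2 : ∑ j, x j * suppFn (S j) (fun i => Real.log (‖w ⟨j, i⟩‖)) ≤
          suppFn T (fun j => suppFn (S j) (fun i => Real.log (‖w ⟨j, i⟩‖))) :=
        stmt10.le_suppFn hTc _ hxT
      have h3 : ∑ j, x j * (L j - ε / (C + 1)) =
          ∑ j, x j * L j - (ε / (C + 1)) * ∑ j, x j := by
        rw [Finset.mul_sum, ← Finset.sum_sub_distrib]
        exact Finset.sum_congr rfl fun j _ => by ring
      have h4 : (ε / (C + 1)) * ∑ j, x j ≤ (ε / (C + 1)) * C :=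
        mul_le_mul_of_nonneg_left (hCle x hxT) hδ.le
      have h5 : (ε / (C + 1)) * C ≤ ε := by
        rw [div_mul_eq_mul_div, div_le_iff₀ (by positivity : (0:ℝ) < C + 1)]
        nlinarith
      rw [hxval]
      linarith
    have h := Filter.le_limsup_of_frequently_le hfreq2 hΦbdd
    linarith
end

section
/- Let S ≠ {0} be a compact convex subset of ℝ^n_+ containing 0 which is not a simplex, i.e. S ≠ ch{0, x_1 e_1, …, x_n e_n} for every x ∈ ℝ^n_+. Then there exists t_0 > 0 such that for every t > t_0 the sublevel set {z ∈ ℂ^n : H_S(z) ≤ t} is not convex. -/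
open MeasureTheory Filter Topology Pointwise ENNReal

section Aux
variable {n : ℕ} {S : Set (Fin n → ℝ)}

variable {n : ℕ} {S : Set (Fin n → ℝ)}

lemma suppFn_exists_max (hSc : IsCompact S) (hS0 : (0 : Fin n → ℝ) ∈ S) (ξ : Fin n → ℝ) :
    ∃ s ∈ S, (∀ s' ∈ S, ∑ i, s' i * ξ i ≤ ∑ i, s i * ξ i) ∧
      suppFn S ξ = ∑ i, s i * ξ i := by
  have hne : S.Nonempty := ⟨0, hS0⟩
  have hcont : ContinuousOn (fun s : Fin n → ℝ => ∑ i, s i * ξ i) S := by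
    apply Continuous.continuousOn
    exact continuous_finset_sum _ fun i _ => (continuous_apply i).mul continuous_const
  obtain ⟨s, hsS, hmax⟩ := hSc.exists_isMaxOn hne hcont
  have hbdd : BddAbove ((fun x : Fin n → ℝ => ∑ i, x i * ξ i) '' S) := by
    refine ⟨∑ i, s i * ξ i, ?_⟩
    rintro y ⟨s', hs', rfl⟩; exact hmax hs'
  refine ⟨s, hsS, fun s' hs' => hmax hs', le_antisymm ?_ ?_⟩
  · exact csSup_le (hne.image _) (by rintro y ⟨s', hs', rfl⟩; exact hmax hs')
  · exact le_csSup hbdd ⟨s, hsS, rfl⟩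

lemma le_suppFn (hSc : IsCompact S) (hS0 : (0 : Fin n → ℝ) ∈ S) {s : Fin n → ℝ}
    (hs : s ∈ S) (ξ : Fin n → ℝ) : ∑ i, s i * ξ i ≤ suppFn S ξ := by
  obtain ⟨s', _, hmax, heq⟩ := suppFn_exists_max hSc hS0 ξ
  rw [heq]; exact hmax s hs

lemma suppFn_nonneg (hSc : IsCompact S) (hS0 : (0 : Fin n → ℝ) ∈ S) (ξ : Fin n → ℝ) :
    0 ≤ suppFn S ξ := by
  have := le_suppFn hSc hS0 hS0 ξ
  simpa using this

lemma suppFn_smul (hSc : IsCompact S) (hS0 : (0 : Fin n → ℝ) ∈ S) {c : ℝ} (hc : 0 ≤ c)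
    (ξ : Fin n → ℝ) : suppFn S (fun i => c * ξ i) = c * suppFn S ξ := by
  have key : ∀ s : Fin n → ℝ, ∑ i, s i * (c * ξ i) = c * ∑ i, s i * ξ i := by
    intro s; rw [Finset.mul_sum]; exact Finset.sum_congr rfl fun i _ => by ring
  obtain ⟨s₁, hs₁, _, h₁⟩ := suppFn_exists_max hSc hS0 (fun i => c * ξ i)
  obtain ⟨s₂, hs₂, _, h₂⟩ := suppFn_exists_max hSc hS0 ξ
  refine le_antisymm ?_ ?_
  · rw [h₁, key s₁]
    exact mul_le_mul_of_nonneg_left (le_suppFn hSc hS0 hs₁ ξ) hc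
  · rw [h₂, ← key s₂]
    exact le_suppFn hSc hS0 hs₂ _

lemma suppFn_mono (hSc : IsCompact S) (hS0 : (0 : Fin n → ℝ) ∈ S)
    (hSpos : ∀ s ∈ S, ∀ i, 0 ≤ s i) {ξ η : Fin n → ℝ} (h : ∀ i, ξ i ≤ η i) :
    suppFn S ξ ≤ suppFn S η := by
  obtain ⟨s, hs, _, heq⟩ := suppFn_exists_max hSc hS0 ξ
  rw [heq]
  calc ∑ i, s i * ξ i ≤ ∑ i, s i * η i :=
        Finset.sum_le_sum fun i _ => mul_le_mul_of_nonneg_left (h i) (hSpos s hs i)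
    _ ≤ suppFn S η := le_suppFn hSc hS0 hs η

lemma suppFn_continuous (hSc : IsCompact S) (hS0 : (0 : Fin n → ℝ) ∈ S) :
    Continuous (suppFn S) := by
  obtain ⟨R, hR⟩ := hSc.isBounded.subset_closedBall 0
  have hRnn : 0 ≤ R := by
    have := hR hS0; simpa using this
  have hcoord : ∀ s ∈ S, ∀ i, |s i| ≤ R := by
    intro s hs i
    have h1 : ‖s‖ ≤ R := by have := hR hs; simpa [dist_eq_norm] using this
    calc |s i| = ‖s i‖ := rfl
      _ ≤ ‖s‖ := norm_le_pi_norm s i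
      _ ≤ R := h1
  have key : ∀ ξ η : Fin n → ℝ, suppFn S ξ - suppFn S η ≤ (R * n) * dist ξ η := by
    intro ξ η
    obtain ⟨s, hs, _, heq⟩ := suppFn_exists_max hSc hS0 ξ
    have h2 : ∑ i, s i * ξ i - ∑ i, s i * η i ≤ (R * n) * dist ξ η := by
      rw [← Finset.sum_sub_distrib]
      calc ∑ i, (s i * ξ i - s i * η i) ≤ ∑ i, R * dist ξ η := by
            refine Finset.sum_le_sum fun i _ => ?_
            have : s i * ξ i - s i * η i = s i * (ξ i - η i) := by ring
            rw [this]
            calc s i * (ξ i - η i) ≤ |s i * (ξ i - η i)| := le_abs_self _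
              _ = |s i| * |ξ i - η i| := abs_mul _ _
              _ ≤ R * dist ξ η := by
                  apply mul_le_mul (hcoord s hs i) ?_ (abs_nonneg _) hRnn
                  rw [← Real.dist_eq]
                  exact dist_le_pi_dist ξ η i
        _ = (R * n) * dist ξ η := by
            rw [Finset.sum_const, Finset.card_univ, Fintype.card_fin, nsmul_eq_mul]; ring
    calc suppFn S ξ - suppFn S η ≤ ∑ i, s i * ξ i - ∑ i, s i * η i := by
          rw [heq]; exact sub_le_sub_left (le_suppFn hSc hS0 hs η) _
      _ ≤ (R * n) * dist ξ η := h2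
  have : LipschitzWith (R * n).toNNReal (suppFn S) := by
    apply LipschitzWith.of_dist_le_mul
    intro ξ η
    rw [Real.dist_eq, abs_sub_le_iff, Real.coe_toNNReal _ (by positivity)]
    exact ⟨key ξ η, by simpa [dist_comm] using key η ξ⟩
  exact this.continuous


variable {n : ℕ} {S : Set (Fin n → ℝ)}

lemma HS_eq (hScont : Continuous (suppFn S)) {z : Fin n → ℂ} (hz : ∀ i, z i ≠ 0) :
    HS S z = suppFn S (fun i => Real.log ‖z i‖) := by
  have hU : IsOpen {w : Fin n → ℂ | ∀ i, w i ≠ 0} := by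
    have : {w : Fin n → ℂ | ∀ i, w i ≠ 0} = ⋂ i, (fun w : Fin n → ℂ => w i) ⁻¹' {0}ᶜ := by
      ext w; simp
    rw [this]
    exact isOpen_iInter_of_finite fun i => (continuous_apply i).isOpen_preimage _ isOpen_compl_singleton
  have hmem : {w : Fin n → ℂ | ∀ i, w i ≠ 0} ∈ 𝓝 z := hU.mem_nhds hz
  have hnw : 𝓝[{w : Fin n → ℂ | ∀ i, w i ≠ 0}] z = 𝓝 z := nhdsWithin_eq_nhds.mpr hmem
  rw [HS, hnw]
  have hcont : ContinuousAt
      (fun w : Fin n → ℂ => suppFn S fun i => Real.log ‖w i‖) z := by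
    apply hScont.continuousAt.comp
    apply continuousAt_pi.2
    intro i
    exact (Real.continuousAt_log (by simpa using hz i)).comp
      (continuous_norm.continuousAt.comp (continuous_apply i).continuousAt)
  exact hcont.tendsto.limsup_eq

lemma dichotomy (hSc : IsCompact S) (hSconv : Convex ℝ S)
    (hSpos : ∀ s ∈ S, ∀ i, 0 ≤ s i) (hS0 : (0 : Fin n → ℝ) ∈ S) (hn : 0 < n)
    (maxc : ∀ ξ η : Fin n → ℝ, suppFn S ξ ≤ 1 → suppFn S η ≤ 1 →
      suppFn S (fun i => max (ξ i) (η i)) ≤ 1) :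
    ∃ x : Fin n → ℝ, (∀ i, 0 ≤ x i) ∧
      S = convexHull ℝ ({0} ∪ Set.range fun i => Pi.single i (x i)) := by
  classical
  set x : Fin n → ℝ := fun i => suppFn S (Pi.single i 1) with hxdef
  have hx : ∀ i, 0 ≤ x i := fun i => suppFn_nonneg hSc hS0 _
  -- evaluation on single vectors
  have hsingle : ∀ (i : Fin n) (a : ℝ), 0 ≤ a → suppFn S (Pi.single i a) = a * x i := by
    intro i a ha
    have : Pi.single i a = fun j => a * (Pi.single i 1 : Fin n → ℝ) j := by
      funext j
      by_cases hji : j = i <;> simp [Pi.single_apply, hji]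
    rw [this, suppFn_smul hSc hS0 ha]
  -- scaled max-closedness
  have maxc_c : ∀ c : ℝ, 0 < c → ∀ ξ η : Fin n → ℝ, suppFn S ξ ≤ c → suppFn S η ≤ c →
      suppFn S (fun i => max (ξ i) (η i)) ≤ c := by
    intro c hc ξ η hξ hη
    have hcinv : (0:ℝ) ≤ c⁻¹ := by positivity
    have h1 : suppFn S (fun i => c⁻¹ * ξ i) ≤ 1 := by
      rw [suppFn_smul hSc hS0 hcinv]
      rw [inv_mul_le_iff₀ hc, mul_one]; exact hξ
    have h2 : suppFn S (fun i => c⁻¹ * η i) ≤ 1 := by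
      rw [suppFn_smul hSc hS0 hcinv]
      rw [inv_mul_le_iff₀ hc, mul_one]; exact hη
    have h3 := maxc _ _ h1 h2
    have h4 : (fun i => max (c⁻¹ * ξ i) (c⁻¹ * η i)) = fun i => c⁻¹ * max (ξ i) (η i) := by
      funext i
      exact (mul_max_of_nonneg _ _ hcinv).symm
    rw [h4, suppFn_smul hSc hS0 hcinv] at h3
    calc suppFn S (fun i => max (ξ i) (η i)) = c * (c⁻¹ * suppFn S fun i => max (ξ i) (η i)) := by
          field_simp
      _ ≤ c * 1 := mul_le_mul_of_nonneg_left h3 hc.le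
      _ = c := mul_one c
  -- key: bounding suppFn by values on single vectors
  have key : ∀ c : ℝ, 0 < c → ∀ ξ : Fin n → ℝ,
      (∀ i, suppFn S (Pi.single i (max (ξ i) 0)) ≤ c) → suppFn S ξ ≤ c := by
    intro c hc ξ hi
    have hne : (Finset.univ : Finset (Fin n)).Nonempty := by
      simpa [Finset.univ_nonempty_iff] using Fin.pos_iff_nonempty.mp hn
    set v : Fin n → (Fin n → ℝ) := fun i => Pi.single i (max (ξ i) 0) with hv
    have hsup : suppFn S (Finset.univ.sup' hne v) ≤ c := by
      refine Finset.sup'_induction (p := fun w => suppFn S w ≤ c) hne v ?_ ?_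
      · intro a ha b hb
        have : a ⊔ b = fun i => max (a i) (b i) := rfl
        rw [this]
        exact maxc_c c hc a b ha hb
      · intro i _; exact hi i
    have hle : ∀ i, ξ i ≤ (Finset.univ.sup' hne v) i := by
      intro i
      have h1 : v i ≤ Finset.univ.sup' hne v := Finset.le_sup' v (Finset.mem_univ i)
      have h2 : v i i = max (ξ i) 0 := by simp [hv]
      calc ξ i ≤ max (ξ i) 0 := le_max_left _ _
        _ = v i i := h2.symm
        _ ≤ _ := h1 i
    exact le_trans (suppFn_mono hSc hS0 hSpos hle) hsup
  refine ⟨x, hx, ?_⟩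
  set P : Set (Fin n → ℝ) := {0} ∪ Set.range fun i => Pi.single i (x i) with hP
  have hPfin : P.Finite := (Set.finite_singleton 0).union (Set.finite_range _)
  -- S ⊆ convexHull P
  have hsub : S ⊆ convexHull ℝ P := by
    intro s hs
    by_contra hsP
    obtain ⟨f, u, hfa, hfs⟩ := geometric_hahn_banach_closed_point
      (convex_convexHull ℝ P) ((hPfin.isCompact_convexHull (𝕜 := ℝ)).isClosed) hsP
    set ξ : Fin n → ℝ := fun i => f (Pi.single i 1) with hξ
    have hfeval : ∀ a : Fin n → ℝ, f a = ∑ i, a i * ξ i := by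
      intro a
      have h1 : a = ∑ i, a i • (Pi.single i 1 : Fin n → ℝ) := by
        funext j
        rw [Finset.sum_apply]
        rw [Finset.sum_eq_single j (fun i _ hij => by
          simp [Pi.single_eq_of_ne (Ne.symm hij)]) (fun h => absurd (Finset.mem_univ j) h)]
        simp
      have h2 : f a = ∑ i, a i • f (Pi.single i 1 : Fin n → ℝ) := by
        conv_lhs => rw [h1]
        rw [map_sum]
        exact Finset.sum_congr rfl fun i _ => map_smul f _ _
      rw [h2]
      exact Finset.sum_congr rfl fun i _ => rfl
    have hu0 : 0 < u := by
      have h0 : (0 : Fin n → ℝ) ∈ convexHull ℝ P :=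
        subset_convexHull ℝ P (Set.mem_union_left _ rfl)
      have := hfa 0 h0
      rwa [map_zero] at this
    have hxiu : ∀ i, x i * ξ i < u := by
      intro i
      have hmem : Pi.single i (x i) ∈ convexHull ℝ P :=
        subset_convexHull ℝ P (Set.mem_union_right _ ⟨i, rfl⟩)
      have := hfa _ hmem
      rwa [hfeval, Finset.sum_eq_single i (fun j _ hj => by simp [Pi.single_apply, hj])
        (fun h => absurd (Finset.mem_univ i) h), Pi.single_apply, if_pos rfl] at this
    have hkey : suppFn S ξ ≤ u := by
      apply key u hu0
      intro i
      rw [hsingle i _ (le_max_right _ _)]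
      rcases le_or_gt (ξ i) 0 with h | h
      · have : max (ξ i) 0 = 0 := max_eq_right h
        rw [this, zero_mul]; exact hu0.le
      · have : max (ξ i) 0 = ξ i := max_eq_left h.le
        rw [this, mul_comm]; exact (hxiu i).le
    have : u < suppFn S ξ := by
      calc u < f s := hfs
        _ = ∑ i, s i * ξ i := hfeval s
        _ ≤ suppFn S ξ := le_suppFn hSc hS0 hs ξ
    linarith
  -- convexHull P ⊆ S
  have hsup2 : convexHull ℝ P ⊆ S := by
    apply convexHull_min _ hSconv
    rintro p (hp | ⟨i, rfl⟩)
    · rw [Set.mem_singleton_iff.mp hp]; exact hS0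
    · -- Pi.single i (x i) ∈ S
      show Pi.single i (x i) ∈ S
      rcases eq_or_lt_of_le (hx i) with hxi0 | hxi
      · rw [← hxi0, Pi.single_zero]; exact hS0
      · obtain ⟨s, hsS, _, heq⟩ := suppFn_exists_max hSc hS0 (Pi.single i (1:ℝ))
        have hsi : s i = x i := by
          have : ∑ j, s j * (Pi.single i 1 : Fin n → ℝ) j = s i := by
            rw [Finset.sum_eq_single i (fun j _ hj => by simp [Pi.single_apply, hj])
              (fun h => absurd (Finset.mem_univ i) h)]
            simp
          rw [hxdef]
          dsimp only
          rw [heq]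
          exact this.symm
        -- the half space argument
        set c : Fin n → ℝ := fun j => if 0 < x j then (x j)⁻¹ else 1 with hc
        have hcpos : ∀ j, 0 < c j := by
          intro j; simp only [hc]; split
          · exact inv_pos.mpr (by assumption)
          · exact one_pos
        set K : Set (Fin n → ℝ) := {y | (∀ j, 0 ≤ y j) ∧ ∑ j, c j * y j ≤ 1} with hK
        have hKconv : Convex ℝ K := by
          rintro y ⟨hy1, hy2⟩ z ⟨hz1, hz2⟩ a b ha hb hab
          constructor
          · intro j
            have : (a • y + b • z) j = a * y j + b * z j := rfl
            rw [this]
            exact add_nonneg (mul_nonneg ha (hy1 j)) (mul_nonneg hb (hz1 j))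
          · have hexp : ∑ j, c j * (a • y + b • z) j
                = a * (∑ j, c j * y j) + b * (∑ j, c j * z j) := by
              rw [Finset.mul_sum, Finset.mul_sum, ← Finset.sum_add_distrib]
              exact Finset.sum_congr rfl fun j _ => by
                have : (a • y + b • z) j = a * y j + b * z j := rfl
                rw [this]; ring
            rw [hexp]
            calc a * (∑ j, c j * y j) + b * (∑ j, c j * z j)
                ≤ a * 1 + b * 1 :=
                  add_le_add (mul_le_mul_of_nonneg_left hy2 ha) (mul_le_mul_of_nonneg_left hz2 hb)
              _ = 1 := by rw [mul_one, mul_one, hab]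
        have hPK : P ⊆ K := by
          rintro p (hp | ⟨j, rfl⟩)
          · rw [Set.mem_singleton_iff.mp hp]
            exact ⟨fun j => le_refl 0, by simp⟩
          · constructor
            · intro k; by_cases hkj : k = j <;> simp [Pi.single_apply, hkj, hx j]
            · have hsum : ∑ k, c k * (Pi.single j (x j) : Fin n → ℝ) k = c j * x j := by
                rw [Finset.sum_eq_single j (fun k _ hk => by
                  simp [Pi.single_eq_of_ne hk]) (fun h => absurd (Finset.mem_univ j) h)]
                simp
              rw [hsum, hc]
              dsimp only
              rcases lt_or_ge 0 (x j) with h | h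
              · rw [if_pos h, inv_mul_cancel₀ h.ne']
              · rw [if_neg (not_lt.mpr h)]
                have hxj : x j = 0 := le_antisymm h (hx j)
                rw [hxj, mul_zero]; exact zero_le_one
        have hsK : s ∈ K := convexHull_min hPK hKconv (hsub hsS)
        have hs_eq : s = Pi.single i (x i) := by
          obtain ⟨hs1, hs2⟩ := hsK
          have hci : c i * s i = 1 := by
            rw [hc, hsi]; simp only [if_pos hxi]
            exact inv_mul_cancel₀ hxi.ne'
          have hrest : ∑ j ∈ Finset.univ.erase i, c j * s j ≤ 0 := by
            have htot := Finset.add_sum_erase Finset.univ (fun j => c j * s j) (Finset.mem_univ i)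
            try dsimp only at htot
            rw [hci] at htot
            linarith [hs2, htot]
          have hzero : ∀ j ∈ Finset.univ.erase i, c j * s j = 0 := by
            have hnn : ∀ j ∈ Finset.univ.erase i, 0 ≤ c j * s j :=
              fun j _ => mul_nonneg (hcpos j).le (hs1 j)
            intro j hj
            have hsum0 : ∑ j ∈ Finset.univ.erase i, c j * s j = 0 :=
              le_antisymm hrest (Finset.sum_nonneg hnn)
            exact (Finset.sum_eq_zero_iff_of_nonneg hnn).mp hsum0 j hj
          funext j
          by_cases hji : j = i
          · rw [hji, Pi.single_apply, if_pos rfl, hsi]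
          · have hj : j ∈ Finset.univ.erase i := Finset.mem_erase.mpr ⟨hji, Finset.mem_univ j⟩
            have := hzero j hj
            have hsj : s j = 0 := by
              rcases mul_eq_zero.mp this with h | h
              · exact absurd h (hcpos j).ne'
              · exact h
            rw [hsj, Pi.single_apply, if_neg hji]
        rw [← hs_eq]
        exact hsS
  exact le_antisymm hsub hsup2

end Aux

/-- Non-convexity of sublevel sets of `H_S` (Proposition 6 of the paper): if the compact
convex set `{0} ≠ S ⊆ ℝ^n_+`, `0 ∈ S`, is not a simplex `ch{0, x₁e₁, …, x_ne_n}`, then all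
sublevel sets `{H_S ≤ t}` with `t` large enough are non-convex. -/

theorem stmt15 (n : ℕ) (S : Set (Fin n → ℝ))
    (hSc : IsCompact S) (hSconv : Convex ℝ S)
    (hSpos : ∀ s ∈ S, ∀ i, 0 ≤ s i) (hS0 : (0 : Fin n → ℝ) ∈ S)
    (hSne : S ≠ {0})
    (hSnotsimplex : ∀ x : Fin n → ℝ, (∀ i, 0 ≤ x i) →
      S ≠ convexHull ℝ ({0} ∪ Set.range fun i => Pi.single i (x i))) :
    ∃ t₀ > (0 : ℝ), ∀ t > t₀, ¬ Convex ℝ {z : Fin n → ℂ | HS S z ≤ t} := by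
  classical
  rcases Nat.eq_zero_or_pos n with hn0 | hn
  · exfalso
    apply hSne
    subst hn0
    exact Set.eq_singleton_iff_unique_mem.mpr ⟨hS0, fun s _ => funext fun i => i.elim0⟩
  by_cases hW : ∃ ξ η : Fin n → ℝ, suppFn S ξ ≤ 1 ∧ suppFn S η ≤ 1 ∧
      1 < suppFn S (fun i => max (ξ i) (η i))
  · obtain ⟨ξ, η, hξ, hη, hmax⟩ := hW
    set μ : Fin n → ℝ := fun i => max (ξ i) (η i) with hμ
    obtain ⟨s, hsS, hsmax, hseq⟩ := suppFn_exists_max hSc hS0 μ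
    set ε : ℝ := suppFn S μ - 1 with hε
    have hε0 : 0 < ε := by rw [hε]; linarith [hmax]
    set M : ℝ := suppFn S (fun _ => 1) with hM
    have hM0 : 0 ≤ M := suppFn_nonneg hSc hS0 _
    have hMs : ∑ i, s i ≤ M := by
      have := le_suppFn hSc hS0 hsS (fun _ => 1)
      simpa using this
    have hlog2 : 0 ≤ Real.log 2 := Real.log_nonneg one_le_two
    refine ⟨max 1 (Real.log 2 * M / ε), lt_of_lt_of_le one_pos (le_max_left _ _), ?_⟩
    intro t ht hconv
    have ht1 : 1 < t := lt_of_le_of_lt (le_max_left _ _) ht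
    have ht0 : 0 < t := lt_trans one_pos ht1
    have ht2 : Real.log 2 * M < t * ε := by
      have h := lt_of_le_of_lt (le_max_right 1 (Real.log 2 * M / ε)) ht
      calc Real.log 2 * M = Real.log 2 * M / ε * ε := by field_simp
        _ < t * ε := mul_lt_mul_of_pos_right h hε0
    have hcont := suppFn_continuous hSc hS0
    set z : Fin n → ℂ := fun i => ((Real.exp (t * ξ i) : ℝ) : ℂ) with hz
    set w : Fin n → ℂ := fun i => ((Real.exp (t * η i) : ℝ) : ℂ) with hw
    have hHz : z ∈ {z : Fin n → ℂ | HS S z ≤ t} := by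
      show HS S z ≤ t
      rw [HS_eq hcont (fun i => by
        simp only [hz]
        exact_mod_cast Complex.ofReal_ne_zero.mpr (Real.exp_ne_zero _))]
      have he : (fun i => Real.log ‖z i‖) = fun i => t * ξ i := by
        funext i
        simp only [hz]
        rw [Complex.norm_real, Real.norm_eq_abs, abs_of_pos (Real.exp_pos _), Real.log_exp]
      rw [he, suppFn_smul hSc hS0 ht0.le]
      calc t * suppFn S ξ ≤ t * 1 := mul_le_mul_of_nonneg_left hξ ht0.le
        _ = t := mul_one t
    have hHw : w ∈ {z : Fin n → ℂ | HS S z ≤ t} := by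
      show HS S w ≤ t
      rw [HS_eq hcont (fun i => by
        simp only [hw]
        exact_mod_cast Complex.ofReal_ne_zero.mpr (Real.exp_ne_zero _))]
      have he : (fun i => Real.log ‖w i‖) = fun i => t * η i := by
        funext i
        simp only [hw]
        rw [Complex.norm_real, Real.norm_eq_abs, abs_of_pos (Real.exp_pos _), Real.log_exp]
      rw [he, suppFn_smul hSc hS0 ht0.le]
      calc t * suppFn S η ≤ t * 1 := mul_le_mul_of_nonneg_left hη ht0.le
        _ = t := mul_one t
    have hmid := hconv hHz hHw (by norm_num : (0:ℝ) ≤ 1/2) (by norm_num : (0:ℝ) ≤ 1/2)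
      (by norm_num : (1:ℝ)/2 + 1/2 = 1)
    set m : Fin n → ℂ := (1/2 : ℝ) • z + (1/2 : ℝ) • w with hm
    have hmi : ∀ i, m i = (((Real.exp (t * ξ i) + Real.exp (t * η i)) / 2 : ℝ) : ℂ) := by
      intro i
      have : m i = (1/2 : ℝ) • z i + (1/2 : ℝ) • w i := rfl
      rw [this]
      simp only [hz, hw]
      rw [Complex.real_smul, Complex.real_smul]
      push_cast
      ring
    have habs : ∀ i, ‖m i‖ = (Real.exp (t * ξ i) + Real.exp (t * η i)) / 2 := by
      intro i
      rw [hmi i, Complex.norm_real, Real.norm_eq_abs, abs_of_pos (by positivity)]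
    have hmne : ∀ i, m i ≠ 0 := by
      intro i
      rw [hmi i]
      exact_mod_cast Complex.ofReal_ne_zero.mpr (by positivity)
    have hlow : ∀ i, t * μ i - Real.log 2 ≤ Real.log ‖m i‖ := by
      intro i
      rw [habs i]
      have hpos1 : (0:ℝ) < Real.exp (t * ξ i) + Real.exp (t * η i) := by positivity
      rw [Real.log_div hpos1.ne' two_ne_zero]
      have hle : t * μ i ≤ Real.log (Real.exp (t * ξ i) + Real.exp (t * η i)) := by
        have hμi : μ i = max (ξ i) (η i) := rfl
        rcases max_cases (ξ i) (η i) with ⟨hm1, _⟩ | ⟨hm1, _⟩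
        · rw [hμi, hm1]
          calc t * ξ i = Real.log (Real.exp (t * ξ i)) := (Real.log_exp _).symm
            _ ≤ _ := Real.log_le_log (Real.exp_pos _)
                (le_add_of_nonneg_right (Real.exp_pos _).le)
        · rw [hμi, hm1]
          calc t * η i = Real.log (Real.exp (t * η i)) := (Real.log_exp _).symm
            _ ≤ _ := Real.log_le_log (Real.exp_pos _)
                (le_add_of_nonneg_left (Real.exp_pos _).le)
      linarith
    have hfin : HS S m ≤ t := hmid
    have hbig : t < HS S m := by
      rw [HS_eq hcont hmne]
      have h1 : ∑ i, s i * (t * μ i - Real.log 2) ≤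
          ∑ i, s i * Real.log ‖m i‖ :=
        Finset.sum_le_sum fun i _ => mul_le_mul_of_nonneg_left (hlow i) (hSpos s hsS i)
      have h2 : ∑ i, s i * (t * μ i - Real.log 2) =
          t * (∑ i, s i * μ i) - Real.log 2 * ∑ i, s i := by
        rw [Finset.mul_sum, Finset.mul_sum, ← Finset.sum_sub_distrib]
        exact Finset.sum_congr rfl fun i _ => by ring
      have h3 : ∑ i, s i * Real.log ‖m i‖ ≤
          suppFn S (fun i => Real.log ‖m i‖) := le_suppFn hSc hS0 hsS _
      have h4 : ∑ i, s i * μ i = 1 + ε := by rw [← hseq, hε]; ring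
      have h5 : Real.log 2 * ∑ i, s i ≤ Real.log 2 * M :=
        mul_le_mul_of_nonneg_left hMs hlog2
      have h6 : t * (1 + ε) - Real.log 2 * M ≤
          suppFn S (fun i => Real.log ‖m i‖) := by
        calc t * (1 + ε) - Real.log 2 * M ≤ t * (∑ i, s i * μ i) - Real.log 2 * ∑ i, s i := by
              rw [h4]; linarith
          _ = ∑ i, s i * (t * μ i - Real.log 2) := h2.symm
          _ ≤ ∑ i, s i * Real.log ‖m i‖ := h1
          _ ≤ _ := h3
      have : t < t * (1 + ε) - Real.log 2 * M := by nlinarith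
      linarith
    linarith
  · push_neg at hW
    obtain ⟨x, hx, hSeq⟩ := dichotomy hSc hSconv hSpos hS0 hn (fun ξ η h1 h2 => hW ξ η h1 h2)
    exact absurd hSeq (hSnotsimplex x hx)
end
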